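/- Let R = ℤ[U_1, U_2, U_3, U_4] be the polynomial ring in four variables over ℤ, and let Q = (U_1(U_2 − U_4), U_3(U_2 − U_4)) ⊆ R. Then the R-module T = {x ∈ R/Q : (U_2 − U _4)·x = 0} is NOT isomorphic, as an R-module, to R/(U_2 − U_4). (Consequently Tor_1(R/L, R/Q) ≇ Tor_1(R/L, R/N) for the total braid graph of Figure 12, so the conclusion of Conjecture 2 fails for total braid graphs, i.e. when the graph has no loose ends.) -/

import Mathlib

open MvPolynomial

/-- `R = ℤ[U₁, U₂, U₃, U₄]`, with `Uᵢ = X (i-1)`. -/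
abbrev R4 : Type := MvPolynomial (Fin 4) ℤ

/-- The ideal `Q = (U₁(U₂ − U₄), U₃(U₂ − U₄))` of the total braid graph of
Figure 12. -/
noncomputable def Q4 : Ideal R4 :=
  Ideal.span {X 0 * (X 1 - X 3), X 2 * (X 1 - X 3)}

/-- Substitution `U₄ ↦ U₂` (kills `U₂ − U₄`). -/
noncomputable def σ4 : R4 →ₐ[ℤ] R4 := aeval ![X 0, X 1, X 2, X 1]
/-- Substitution `U₁ ↦ 0`. -/
noncomputable def E1 : R4 →ₐ[ℤ] R4 := aeval ![0, X 1, X 2, X 3]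
/-- Substitution `U₃ ↦ 0`. -/
noncomputable def E3 : R4 →ₐ[ℤ] R4 := aeval ![X 0, X 1, 0, X 3]
/-- Substitution `U₁ ↦ 0`, `U₃ ↦ 0`, `U₄ ↦ U₂`. -/
noncomputable def F4 : R4 →ₐ[ℤ] R4 := aeval ![0, X 1, 0, X 1]

lemma comp1 : E3.comp (E1.comp σ4) = F4 := by
  apply MvPolynomial.algHom_ext
  intro i
  fin_cases i <;> simp [σ4, E1, E3, F4]

lemma comp2 : E1.comp (E3.comp σ4) = F4 := by
  apply MvPolynomial.algHom_ext
  intro i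
  fin_cases i <;> simp [σ4, E1, E3, F4]

/-- For the total braid graph of Figure 12, the `(U₂ − U₄)`-torsion of `R/Q`
(i.e. `Tor₁(R/L, R/Q)`) is not isomorphic as an `R`-module to `R/(U₂ − U₄)`
(i.e. to `Tor₁(R/L, R/N)`): Conjecture 2 fails for total braid graphs. -/
theorem torsionBy_quotient_not_iso :
    ¬ Nonempty
      ((Submodule.torsionBy R4 (R4 ⧸ Q4) (X 1 - X 3)) ≃ₗ[R4]
        (R4 ⧸ (Ideal.span {X 1 - X 3} : Ideal R4))) := by
  rintro ⟨e⟩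
  set d : R4 := X 1 - X 3 with hd
  have hd0 : d ≠ 0 := by
    intro h
    have := congrArg (eval ![0,1,0,0]) h
    simp [hd] at this
  -- the classes of `U₁` and `U₃` are `(U₂ − U₄)`-torsion in `R/Q`
  have hU1 : (Ideal.Quotient.mk Q4 (X 0)) ∈ Submodule.torsionBy R4 (R4 ⧸ Q4) d := by
    rw [Submodule.mem_torsionBy_iff]
    show Ideal.Quotient.mk Q4 (d * X 0) = 0
    rw [Ideal.Quotient.eq_zero_iff_mem, mul_comm]
    exact Ideal.subset_span (Set.mem_insert _ _)
  have hU3 : (Ideal.Quotient.mk Q4 (X 2)) ∈ Submodule.torsionBy R4 (R4 ⧸ Q4) d := by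
    rw [Submodule.mem_torsionBy_iff]
    show Ideal.Quotient.mk Q4 (d * X 2) = 0
    rw [Ideal.Quotient.eq_zero_iff_mem, mul_comm]
    exact Ideal.subset_span (Set.mem_insert_of_mem _ rfl)
  set t1 : Submodule.torsionBy R4 (R4 ⧸ Q4) d := ⟨_, hU1⟩ with ht1
  set t2 : Submodule.torsionBy R4 (R4 ⧸ Q4) d := ⟨_, hU3⟩ with ht2
  -- the Koszul relation `U₃ • t₁ = U₁ • t₂`
  have hrel : (X 2 : R4) • t1 = (X 0 : R4) • t2 := by
    apply Subtype.ext
    show Ideal.Quotient.mk Q4 (X 2 * X 0) = Ideal.Quotient.mk Q4 (X 0 * X 2)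
    rw [mul_comm]
  obtain ⟨α, hα⟩ := Ideal.Quotient.mk_surjective (e t1)
  obtain ⟨β, hβ⟩ := Ideal.Quotient.mk_surjective (e t2)
  have hrel2 : Ideal.Quotient.mk (Ideal.span {d}) (X 2 * α) = Ideal.Quotient.mk (Ideal.span {d}) (X 0 * β) := by
    show (X 2 : R4) • Ideal.Quotient.mk (Ideal.span {d}) α = (X 0 : R4) • Ideal.Quotient.mk (Ideal.span {d}) β
    rw [hα, hβ, ← e.map_smul, ← e.map_smul, hrel]
  obtain ⟨γ, hγ⟩ := Ideal.mem_span_singleton'.mp (Ideal.Quotient.eq.mp hrel2)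
  -- the torsion module is generated by `t₁, t₂`, hence `1 ∈ (α, β) + (d)`
  obtain ⟨x, hx⟩ := e.surjective (Ideal.Quotient.mk _ 1)
  obtain ⟨ξ, hξ⟩ := Ideal.Quotient.mk_surjective (x : R4 ⧸ Q4)
  have hdx : Ideal.Quotient.mk Q4 (d * ξ) = 0 := by
    rw [show Ideal.Quotient.mk Q4 (d * ξ) = d • Ideal.Quotient.mk Q4 ξ from rfl, hξ]
    exact x.2
  have hmem : d * ξ ∈ Q4 := (Ideal.Quotient.eq_zero_iff_mem).mp hdx
  rw [show Q4 = Ideal.span {X 0 * (X 1 - X 3), X 2 * (X 1 - X 3)} from rfl] at hmem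
  obtain ⟨p, q, hpq⟩ := Ideal.mem_span_pair.mp hmem
  have hξ2 : ξ = p * X 0 + q * X 2 := by
    apply mul_left_cancel₀ hd0
    rw [← hpq, hd]; ring
  have hx2 : x = p • t1 + q • t2 := by
    apply Subtype.ext
    show (x : R4 ⧸ Q4) = p • Ideal.Quotient.mk Q4 (X 0) + q • Ideal.Quotient.mk Q4 (X 2)
    rw [← hξ, hξ2]
    rfl
  have hgen : Ideal.Quotient.mk (Ideal.span {d}) 1 =
      Ideal.Quotient.mk (Ideal.span {d}) (p * α + q * β) := by
    rw [← hx, hx2, e.map_add, e.map_smul, e.map_smul, ← hα, ← hβ]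
    rfl
  obtain ⟨r, hr⟩ := Ideal.mem_span_singleton'.mp (Ideal.Quotient.eq.mp hgen)
  have key : (1 : R4) = p * α + q * β + r * d := by linear_combination -hr
  -- evaluate: first `U₄ ↦ U₂` (killing `d`), then `U₁ ↦ 0` kills `α`, `U₃ ↦ 0` kills `β`
  have hσd : σ4 d = 0 := by simp [σ4, hd]
  have hσX2 : σ4 (X 2) = X 2 := by simp [σ4]
  have hσX0 : σ4 (X 0) = X 0 := by simp [σ4]
  have h0 : σ4 γ * σ4 d = σ4 (X 2) * σ4 α - σ4 (X 0) * σ4 β := by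
    rw [← map_mul, ← map_mul, ← map_mul, ← map_sub, hγ]
  rw [hσd, mul_zero, hσX2, hσX0] at h0
  have hσrel : (X 2 : R4) * σ4 α = X 0 * σ4 β := by linear_combination -h0
  have hE1 : E1 (X 2 * σ4 α) = E1 (X 0 * σ4 β) := congrArg E1 hσrel
  rw [map_mul, map_mul, show E1 (X 2 : R4) = X 2 by simp [E1],
    show E1 (X 0 : R4) = 0 by simp [E1], zero_mul] at hE1
  have hα0 : E1 (σ4 α) = 0 := by
    rcases mul_eq_zero.mp hE1 with h | h
    · exact absurd h (X_ne_zero 2)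
    · exact h
  have hE3 : E3 (X 2 * σ4 α) = E3 (X 0 * σ4 β) := congrArg E3 hσrel
  rw [map_mul, map_mul, show E3 (X 2 : R4) = 0 by simp [E3],
    show E3 (X 0 : R4) = X 0 by simp [E3], zero_mul] at hE3
  have hβ0 : E3 (σ4 β) = 0 := by
    rcases mul_eq_zero.mp hE3.symm with h | h
    · exact absurd h (X_ne_zero 0)
    · exact h
  have hFα : F4 α = 0 := by
    rw [← comp1]
    show E3 (E1 (σ4 α)) = 0
    rw [hα0, map_zero]
  have hFβ : F4 β = 0 := by
    rw [← comp2]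
    show E1 (E3 (σ4 β)) = 0
    rw [hβ0, map_zero]
  have hFd : F4 d = 0 := by simp [F4, hd]
  -- conclusion: `1 = 0` in a nontrivial ring
  have := congrArg F4 key
  rw [map_one, map_add, map_add, map_mul, map_mul, map_mul, hFα, hFβ, hFd,
    mul_zero, mul_zero, mul_zero] at this
  simp at this
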